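/- arXiv:1307.7017 — 5 statements merged into one kernel-verified Lean document; each statement's English description precedes it below -/
import Mathlib

section
/- Let ν: [0,1] → ℝ be such that g(x) := ν(x)/ω(x) extends to a C² function on [0,1] with g'(0) = 0, and set c₀ := |g(0)|, c₂ := sup_{x∈[0,1]} |g''(x)|. Then there exists a constant C > 0, independent of ν, such that h₁(ν) ≤ C (c₀ + c₂). -/
noncomputable section

open Real
set_option maxHeartbeats 1000000

/-- `ω(x) = 2 sin (π x / 2)`. -/
def omegaFn (x : ℝ) : ℝ := 2 * Real.sin (π * x / 2)

/-- `z(x,y) = x+y` if `x+y ≤ 1`, else `2-x-y`. -/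
def zfun (x y : ℝ) : ℝ := if x + y ≤ 1 then x + y else 2 - x - y

/-- `h₁(ν)` as a supremum in `ℝ≥0∞`. -/
def h1 (ν : ℝ → ℝ) : ENNReal :=
  sSup {r : ENNReal | ∃ τ₁ τ₂ τ₃ x y : ℝ,
    (τ₁ = 1 ∨ τ₁ = -1) ∧ (τ₂ = 1 ∨ τ₂ = -1) ∧ (τ₃ = 1 ∨ τ₃ = -1) ∧
    x ∈ Set.Icc (0 : ℝ) 1 ∧ y ∈ Set.Icc (0 : ℝ) 1 ∧
    τ₁ * omegaFn x + τ₂ * omegaFn y + τ₃ * omegaFn (zfun x y) ≠ 0 ∧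
    r = ENNReal.ofReal (|τ₁ * ν x + τ₂ * ν y + τ₃ * ν (zfun x y)| /
      |τ₁ * omegaFn x + τ₂ * omegaFn y + τ₃ * omegaFn (zfun x y)|)}

/-- Second derivative within `[0,1]`. -/
def secondDerivOn (g : ℝ → ℝ) : ℝ → ℝ :=
  derivWithin (derivWithin g (Set.Icc 0 1)) (Set.Icc (0 : ℝ) 1)

/-- `c₂ = sup_{x ∈ [0,1]} |g''(x)|`. -/
def c2sup (g : ℝ → ℝ) : ℝ := ⨆ x : Set.Icc (0 : ℝ) 1, |secondDerivOn g x.1|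

/-- Jordan lower bound in convenient form. -/
lemma sin_quarter_lb {t : ℝ} (h0 : 0 ≤ t) (h2 : t ≤ 2) : t / 2 ≤ sin (π * t / 4) := by
  have hpi := pi_pos
  have h1 : (0:ℝ) ≤ π * t / 4 := by positivity
  have h2' : π * t / 4 ≤ π / 2 := by nlinarith
  have := Real.mul_le_sin h1 h2'
  have hne : (π:ℝ) ≠ 0 := ne_of_gt hpi
  calc t / 2 = 2 / π * (π * t / 4) := by field_simp; ring
    _ ≤ sin (π * t / 4) := this

lemma sin_quarter_ub {t : ℝ} (h0 : 0 ≤ t) : sin (π * t / 4) ≤ π * t / 4 :=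
  sin_le (by positivity)

lemma sin_half_ub {t : ℝ} (h0 : 0 ≤ t) : 2 * sin (π * t / 2) ≤ π * t := by
  have := sin_le (x := π * t / 2) (by positivity)
  nlinarith

lemma sin_half_nonneg {t : ℝ} (h0 : 0 ≤ t) (h2 : t ≤ 2) : 0 ≤ 2 * sin (π * t / 2) := by
  have hpi := pi_pos
  have := sin_nonneg_of_nonneg_of_le_pi (x := π * t / 2) (by positivity) (by nlinarith)
  linarith

/-- sum-to-product identity, pattern (+,+,-). -/
lemma iden2 (x y : ℝ) :
    2 * sin (π * x / 2) + 2 * sin (π * y / 2) - 2 * sin (π * (x + y) / 2)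
      = 8 * sin (π * x / 4) * sin (π * y / 4) * sin (π * (x + y) / 4) := by
  have ex : π * x / 2 = 2 * (π * x / 4) := by ring
  have ey : π * y / 2 = 2 * (π * y / 4) := by ring
  have exy : π * (x + y) / 2 = 2 * (π * x / 4 + π * y / 4) := by ring
  have exy4 : π * (x + y) / 4 = π * x / 4 + π * y / 4 := by ring
  rw [ex, ey, exy, exy4, sin_two_mul, sin_two_mul, sin_two_mul, sin_add, cos_add]
  have hp := sin_sq_add_cos_sq (π * x / 4)
  have hq := sin_sq_add_cos_sq (π * y / 4)
  linear_combination (-4*sin (π*x/4)*cos (π*x/4)) * hq + (-4*sin (π*y/4)*cos (π*y/4)) * hp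

/-- sum-to-product identity, pattern (+,-,+). -/
lemma iden3 (x y : ℝ) :
    2 * sin (π * x / 2) - 2 * sin (π * y / 2) + 2 * sin (π * (x + y) / 2)
      = 8 * sin (π * x / 4) * sin (π * (2 - y) / 4) * sin (π * (2 - x - y) / 4) := by
  have e1 : π * (2 - y) / 4 = π / 2 - π * y / 4 := by ring
  have e2 : π * (2 - x - y) / 4 = π / 2 - (π * x / 4 + π * y / 4) := by ring
  rw [e1, e2, sin_pi_div_two_sub, sin_pi_div_two_sub]
  have ex : π * x / 2 = 2 * (π * x / 4) := by ring
  have ey : π * y / 2 = 2 * (π * y / 4) := by ring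
  have exy : π * (x + y) / 2 = 2 * (π * x / 4 + π * y / 4) := by ring
  rw [ex, ey, exy, sin_two_mul, sin_two_mul, sin_two_mul, sin_add, cos_add]
  have hp := sin_sq_add_cos_sq (π * x / 4)
  have hq := sin_sq_add_cos_sq (π * y / 4)
  linear_combination (-4*sin (π*x/4)*cos (π*x/4)) * hq + (4*sin (π*y/4)*cos (π*y/4)) * hp

lemma zfun_comm (x y : ℝ) : zfun y x = zfun x y := by
  unfold zfun
  rw [add_comm y x]
  split_ifs with h <;> ring

lemma zfun_mem {x y : ℝ} (hx : x ∈ Set.Icc (0:ℝ) 1) (hy : y ∈ Set.Icc (0:ℝ) 1) :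
    zfun x y ∈ Set.Icc (0:ℝ) 1 := by
  obtain ⟨hx0, hx1⟩ := hx; obtain ⟨hy0, hy1⟩ := hy
  unfold zfun; split_ifs with h <;> constructor <;> linarith

lemma omega_zfun {x y : ℝ} (hx : x ∈ Set.Icc (0:ℝ) 1) (hy : y ∈ Set.Icc (0:ℝ) 1) :
    omegaFn (zfun x y) = 2 * sin (π * (x + y) / 2) := by
  unfold zfun omegaFn
  split_ifs with h
  · rfl
  · have e : π * (2 - x - y) / 2 = π - π * (x + y) / 2 := by ring
    rw [e, sin_pi_sub]

lemma omega_nonneg {x : ℝ} (hx : x ∈ Set.Icc (0:ℝ) 1) : 0 ≤ omegaFn x :=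
  sin_half_nonneg hx.1 (by linarith [hx.2])

lemma omega_le {x : ℝ} (hx : 0 ≤ x) : omegaFn x ≤ π * x := sin_half_ub hx

lemma abs_dist_xz {x y : ℝ} (hx : x ∈ Set.Icc (0:ℝ) 1) (hy : y ∈ Set.Icc (0:ℝ) 1) :
    |x - zfun x y| ≤ y := by
  obtain ⟨hx0, hx1⟩ := hx; obtain ⟨hy0, hy1⟩ := hy
  unfold zfun; split_ifs with h <;> rw [abs_le] <;> constructor <;> linarith

lemma abs_dist_yz {x y : ℝ} (hx : x ∈ Set.Icc (0:ℝ) 1) (hy : y ∈ Set.Icc (0:ℝ) 1) :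
    |y - zfun x y| ≤ x := by
  rw [← zfun_comm]; exact abs_dist_xz hy hx

/-- refined distance bound used in pattern (+,+,-). -/
lemma max_dist_xz {x y : ℝ} (hx : x ∈ Set.Icc (0:ℝ) 1) (hy : y ∈ Set.Icc (0:ℝ) 1) :
    max x (zfun x y) * |x - zfun x y| ≤ (x + y) * y := by
  obtain ⟨hx0, hx1⟩ := hx; obtain ⟨hy0, hy1⟩ := hy
  unfold zfun; split_ifs with h
  · have h1 : max x (x + y) = x + y := max_eq_right (by linarith)
    have h2 : |x - (x + y)| = y := by rw [abs_sub_comm]; simp [abs_of_nonneg hy0]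
    rw [h1, h2]
  · have h1 : max x (2 - x - y) ≤ 1 := max_le hx1 (by linarith)
    have h2 : |x - (2 - x - y)| ≤ y := by rw [abs_le]; constructor <;> linarith
    have h3 : 0 ≤ max x (2 - x - y) := le_max_of_le_left hx0
    nlinarith

lemma max_dist_yz {x y : ℝ} (hx : x ∈ Set.Icc (0:ℝ) 1) (hy : y ∈ Set.Icc (0:ℝ) 1) :
    max y (zfun x y) * |y - zfun x y| ≤ (x + y) * x := by
  rw [← zfun_comm]
  have := max_dist_xz hy hx
  rw [add_comm y x] at this
  exact this

lemma prod3_mono {a b c A B C : ℝ} (ha : 0 ≤ a) (hb : 0 ≤ b) (hc : 0 ≤ c)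
    (hA : a ≤ A) (hB : b ≤ B) (hC : c ≤ C) : a * b * c ≤ A * B * C := by
  have h1 : a * b ≤ A * B := mul_le_mul hA hB hb (ha.trans hA)
  exact mul_le_mul h1 hC hc (mul_nonneg (ha.trans hA) (hb.trans hB))

section Keys
variable {g : ℝ → ℝ} {c2 : ℝ}

/-- pattern (+,+,+) -/
lemma key1 (hc2 : 0 ≤ c2)
    (hq : ∀ t ∈ Set.Icc (0:ℝ) 1, |g t - g 0| ≤ c2 * t ^ 2)
    {x y : ℝ} (hx : x ∈ Set.Icc (0:ℝ) 1) (hy : y ∈ Set.Icc (0:ℝ) 1) :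
    |omegaFn x * g x + omegaFn y * g y + omegaFn (zfun x y) * g (zfun x y)|
      ≤ (|g 0| + 50 * c2) * |omegaFn x + omegaFn y + omegaFn (zfun x y)| := by
  have hz := zfun_mem hx hy
  set z := zfun x y
  have hωx := omega_nonneg hx
  have hωy := omega_nonneg hy
  have hωz := omega_nonneg hz
  have hRx := hq x hx; have hRy := hq y hy; have hRz := hq z hz
  have hx2 : x ^ 2 ≤ 1 := by nlinarith [hx.1, hx.2]
  have hy2 : y ^ 2 ≤ 1 := by nlinarith [hy.1, hy.2]
  have hz2 : z ^ 2 ≤ 1 := by nlinarith [hz.1, hz.2]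
  have hD : |omegaFn x + omegaFn y + omegaFn z| = omegaFn x + omegaFn y + omegaFn z :=
    abs_of_nonneg (by linarith)
  rw [hD]
  have e : omegaFn x * g x + omegaFn y * g y + omegaFn z * g z
      = g 0 * (omegaFn x + omegaFn y + omegaFn z)
        + (omegaFn x * (g x - g 0) + omegaFn y * (g y - g 0) + omegaFn z * (g z - g 0)) := by
    ring
  rw [e]
  refine (abs_add_le _ _).trans ?_
  have h1 : |g 0 * (omegaFn x + omegaFn y + omegaFn z)|
      = |g 0| * (omegaFn x + omegaFn y + omegaFn z) := by
    rw [abs_mul, hD]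
  have bx : |omegaFn x * (g x - g 0)| ≤ omegaFn x * (c2 * x ^ 2) := by
    rw [abs_mul, abs_of_nonneg hωx]; exact mul_le_mul_of_nonneg_left hRx hωx
  have by' : |omegaFn y * (g y - g 0)| ≤ omegaFn y * (c2 * y ^ 2) := by
    rw [abs_mul, abs_of_nonneg hωy]; exact mul_le_mul_of_nonneg_left hRy hωy
  have bz : |omegaFn z * (g z - g 0)| ≤ omegaFn z * (c2 * z ^ 2) := by
    rw [abs_mul, abs_of_nonneg hωz]; exact mul_le_mul_of_nonneg_left hRz hωz
  have h2 : |omegaFn x * (g x - g 0) + omegaFn y * (g y - g 0) + omegaFn z * (g z - g 0)|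
      ≤ omegaFn x * (c2 * x ^ 2) + omegaFn y * (c2 * y ^ 2) + omegaFn z * (c2 * z ^ 2) :=
    (abs_add_three _ _ _).trans (by linarith)
  rw [h1]
  nlinarith [mul_nonneg hωx hc2, mul_nonneg hωy hc2, mul_nonneg hωz hc2,
    mul_le_mul_of_nonneg_left hx2 (mul_nonneg hωx hc2),
    mul_le_mul_of_nonneg_left hy2 (mul_nonneg hωy hc2),
    mul_le_mul_of_nonneg_left hz2 (mul_nonneg hωz hc2)]

/-- pattern (+,+,-) -/
lemma key2 (hc2 : 0 ≤ c2)
    (hq : ∀ t ∈ Set.Icc (0:ℝ) 1, |g t - g 0| ≤ c2 * t ^ 2)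
    (hl : ∀ s t, s ∈ Set.Icc (0:ℝ) 1 → t ∈ Set.Icc (0:ℝ) 1 →
      |g s - g t| ≤ c2 * (max s t * |s - t|))
    {x y : ℝ} (hx : x ∈ Set.Icc (0:ℝ) 1) (hy : y ∈ Set.Icc (0:ℝ) 1) :
    |omegaFn x * g x + omegaFn y * g y - omegaFn (zfun x y) * g (zfun x y)|
      ≤ (|g 0| + 50 * c2) * |omegaFn x + omegaFn y - omegaFn (zfun x y)| := by
  have hz := zfun_mem hx hy
  have hmaxxz := max_dist_xz hx hy
  have hmaxyz := max_dist_yz hx hy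
  have hωzId := omega_zfun hx hy
  obtain ⟨hx0, hx1⟩ := hx; obtain ⟨hy0, hy1⟩ := hy
  have hxy2 : x + y ≤ 2 := by linarith
  have hxy0 : (0:ℝ) ≤ x + y := by linarith
  obtain ⟨z, hzdef⟩ : ∃ w, zfun x y = w := ⟨_, rfl⟩
  rw [hzdef] at hz hmaxxz hmaxyz hωzId ⊢
  set D := omegaFn x + omegaFn y - omegaFn z with hDdef
  have hpi4 := pi_le_four
  -- identity for D
  have hDId : D = 8 * sin (π * x / 4) * sin (π * y / 4) * sin (π * (x + y) / 4) := by
    rw [hDdef, hωzId]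
    show 2 * sin (π * x / 2) + 2 * sin (π * y / 2) - 2 * sin (π * (x+y) / 2) = _
    exact iden2 x y
  have lbx := sin_quarter_lb hx0 (by linarith)
  have lby := sin_quarter_lb hy0 (by linarith)
  have lbxy := sin_quarter_lb hxy0 hxy2
  have ubx : sin (π * x / 4) ≤ x := (sin_quarter_ub hx0).trans (by nlinarith)
  have uby : sin (π * y / 4) ≤ y := (sin_quarter_ub hy0).trans (by nlinarith)
  have ubxy : sin (π * (x + y) / 4) ≤ x + y := (sin_quarter_ub hxy0).trans (by nlinarith)
  have hsin_x0 : (0:ℝ) ≤ sin (π * x / 4) := le_trans (by linarith) lbx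
  have hsin_y0 : (0:ℝ) ≤ sin (π * y / 4) := le_trans (by linarith) lby
  have hsin_xy0 : (0:ℝ) ≤ sin (π * (x + y) / 4) := le_trans (by linarith) lbxy
  have hxyz0 : (0:ℝ) ≤ x * y * (x + y) := mul_nonneg (mul_nonneg hx0 hy0) hxy0
  have hD_lb : x * y * (x + y) ≤ D := by
    have h := prod3_mono (by linarith : (0:ℝ) ≤ x/2) (by linarith : (0:ℝ) ≤ y/2)
      (by linarith : (0:ℝ) ≤ (x+y)/2) lbx lby lbxy
    rw [hDId]; nlinarith [h]
  have hD_ub : D ≤ 8 * (x * y * (x + y)) := by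
    have h := prod3_mono hsin_x0 hsin_y0 hsin_xy0 ubx uby ubxy
    rw [hDId]; nlinarith [h]
  have hD0 : 0 ≤ D := le_trans hxyz0 hD_lb
  have habsD : |D| = D := abs_of_nonneg hD0
  -- numerator decomposition
  have e : omegaFn x * g x + omegaFn y * g y - omegaFn z * g z
      = g 0 * D + (omegaFn x * (g x - g z) + omegaFn y * (g y - g z) + D * (g z - g 0)) := by
    rw [hDdef]; ring
  have hωx0 := omega_nonneg ⟨hx0, hx1⟩
  have hωy0 := omega_nonneg ⟨hy0, hy1⟩
  have hωxu : omegaFn x ≤ 4 * x := (omega_le hx0).trans (by nlinarith)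
  have hωyu : omegaFn y ≤ 4 * y := (omega_le hy0).trans (by nlinarith)
  -- three Lipschitz-type bounds
  have d1 : |g x - g z| ≤ c2 * ((x + y) * y) := by
    refine (hl x z ⟨hx0, hx1⟩ hz).trans ?_
    exact mul_le_mul_of_nonneg_left hmaxxz hc2
  have d2 : |g y - g z| ≤ c2 * ((x + y) * x) := by
    refine (hl y z ⟨hy0, hy1⟩ hz).trans ?_
    exact mul_le_mul_of_nonneg_left hmaxyz hc2
  have hz2 : z ^ 2 ≤ 1 := by nlinarith [hz.1, hz.2]
  have d3 : |g z - g 0| ≤ c2 := by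
    refine (hq z hz).trans ?_
    nlinarith [mul_le_mul_of_nonneg_left hz2 hc2]
  have b1 : |omegaFn x * (g x - g z)| ≤ (4 * x) * (c2 * ((x + y) * y)) := by
    rw [abs_mul, abs_of_nonneg hωx0]
    exact mul_le_mul hωxu d1 (abs_nonneg _) (by linarith)
  have b2 : |omegaFn y * (g y - g z)| ≤ (4 * y) * (c2 * ((x + y) * x)) := by
    rw [abs_mul, abs_of_nonneg hωy0]
    exact mul_le_mul hωyu d2 (abs_nonneg _) (by linarith)
  have b3 : |D * (g z - g 0)| ≤ (8 * (x * y * (x + y))) * c2 := by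
    rw [abs_mul, abs_of_nonneg hD0]
    exact mul_le_mul hD_ub d3 (abs_nonneg _) (by linarith)
  have hsum : (4*x) * (c2 * ((x+y)*y)) + (4*y) * (c2 * ((x+y)*x)) + (8*(x*y*(x+y))) * c2
      = 16 * (c2 * (x * y * (x + y))) := by ring
  have hM2 : |omegaFn x * (g x - g z) + omegaFn y * (g y - g z) + D * (g z - g 0)|
      ≤ 16 * (c2 * (x * y * (x + y))) :=
    (abs_add_three _ _ _).trans (by rw [← hsum]; exact add_le_add (add_le_add b1 b2) b3)
  rw [e, habsD]
  refine (abs_add_le _ _).trans ?_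
  rw [abs_mul, habsD]
  have hfin : c2 * (x * y * (x + y)) ≤ c2 * D := mul_le_mul_of_nonneg_left hD_lb hc2
  nlinarith [abs_nonneg (g 0), mul_nonneg hc2 hD0, hM2, hfin]

/-- pattern (+,-,+) -/
lemma key3 (hc2 : 0 ≤ c2)
    (hq : ∀ t ∈ Set.Icc (0:ℝ) 1, |g t - g 0| ≤ c2 * t ^ 2)
    (hl : ∀ s t, s ∈ Set.Icc (0:ℝ) 1 → t ∈ Set.Icc (0:ℝ) 1 →
      |g s - g t| ≤ c2 * (max s t * |s - t|))
    {x y : ℝ} (hx : x ∈ Set.Icc (0:ℝ) 1) (hy : y ∈ Set.Icc (0:ℝ) 1) :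
    |omegaFn x * g x - omegaFn y * g y + omegaFn (zfun x y) * g (zfun x y)|
      ≤ (|g 0| + 50 * c2) * |omegaFn x - omegaFn y + omegaFn (zfun x y)| := by
  have hz := zfun_mem hx hy
  have hdyz := abs_dist_yz hx hy
  have hωzId := omega_zfun hx hy
  obtain ⟨hx0, hx1⟩ := hx; obtain ⟨hy0, hy1⟩ := hy
  have hxy2 : x + y ≤ 2 := by linarith
  have hxy0 : (0:ℝ) ≤ x + y := by linarith
  obtain ⟨z, hzdef⟩ : ∃ w, zfun x y = w := ⟨_, rfl⟩
  rw [hzdef] at hz hdyz hωzId ⊢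
  set D := omegaFn x - omegaFn y + omegaFn z with hDdef
  have hpi4 := pi_le_four
  have hDId : D = 8 * sin (π * x / 4) * sin (π * (2 - y) / 4) * sin (π * (2 - x - y) / 4) := by
    rw [hDdef, hωzId]
    show 2 * sin (π * x / 2) - 2 * sin (π * y / 2) + 2 * sin (π * (x+y) / 2) = _
    exact iden3 x y
  have lbx := sin_quarter_lb hx0 (by linarith)
  have lby2 := sin_quarter_lb (t := 2 - y) (by linarith) (by linarith)
  have lbxy2 := sin_quarter_lb (t := 2 - x - y) (by linarith) (by linarith)
  have ubx : sin (π * x / 4) ≤ x := (sin_quarter_ub hx0).trans (by nlinarith)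
  have uby2 : sin (π * (2 - y) / 4) ≤ 1 := sin_le_one _
  have ubxy2 : sin (π * (2 - x - y) / 4) ≤ 2 - x - y :=
    (sin_quarter_ub (by linarith)).trans (by nlinarith)
  have hsin_x0 : (0:ℝ) ≤ sin (π * x / 4) := le_trans (by linarith) lbx
  have hsin_y20 : (0:ℝ) ≤ sin (π * (2 - y) / 4) := le_trans (by linarith) lby2
  have hsin_xy20 : (0:ℝ) ≤ sin (π * (2 - x - y) / 4) := le_trans (by linarith) lbxy2
  have hM0 : (0:ℝ) ≤ x * (2 - x - y) := mul_nonneg hx0 (by linarith)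
  have hD_lb : x * (2 - x - y) ≤ D := by
    have h := prod3_mono (by linarith : (0:ℝ) ≤ x/2) (by linarith : (0:ℝ) ≤ 1/2)
      (by linarith : (0:ℝ) ≤ (2-x-y)/2) lbx
      (show (1:ℝ)/2 ≤ sin (π * (2 - y) / 4) by linarith) lbxy2
    rw [hDId]; nlinarith [h]
  have hD_ub : D ≤ 8 * (x * (2 - x - y)) := by
    have h := prod3_mono hsin_x0 hsin_y20 hsin_xy20 ubx uby2 ubxy2
    rw [hDId]; nlinarith [h]
  have hD0 : 0 ≤ D := le_trans hM0 hD_lb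
  have habsD : |D| = D := abs_of_nonneg hD0
  have e : omegaFn x * g x - omegaFn y * g y + omegaFn z * g z
      = g 0 * D + (omegaFn x * (g x - g y) + omegaFn z * (g z - g y) + D * (g y - g 0)) := by
    rw [hDdef]; ring
  have hωx0 := omega_nonneg ⟨hx0, hx1⟩
  have hωz0 := omega_nonneg hz
  have hωxu : omegaFn x ≤ 4 * x := (omega_le hx0).trans (by nlinarith)
  have hωzu : omegaFn z ≤ 4 * (2 - x - y) := by
    have e2 : π * (x + y) / 2 = π - π * (2 - x - y) / 2 := by ring
    have := sin_half_ub (t := 2 - x - y) (by linarith)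
    rw [hωzId, e2, sin_pi_sub]
    nlinarith
  have hxyabs : |x - y| ≤ 2 - x - y := by
    rw [abs_le]; constructor <;> linarith
  have d1 : |g x - g y| ≤ c2 * (2 - x - y) := by
    refine (hl x y ⟨hx0, hx1⟩ ⟨hy0, hy1⟩).trans ?_
    have h1 : max x y ≤ 1 := max_le hx1 hy1
    have h2 : (0:ℝ) ≤ max x y := le_max_of_le_left hx0
    have : max x y * |x - y| ≤ 2 - x - y := by
      nlinarith [abs_nonneg (x - y)]
    exact mul_le_mul_of_nonneg_left this hc2
  have d2 : |g z - g y| ≤ c2 * x := by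
    refine (hl z y hz ⟨hy0, hy1⟩).trans ?_
    have h1 : max z y ≤ 1 := max_le hz.2 hy1
    have h2 : (0:ℝ) ≤ max z y := le_max_of_le_right hy0
    have h3 : |z - y| ≤ x := by rw [abs_sub_comm]; exact hdyz
    have : max z y * |z - y| ≤ x := by nlinarith [abs_nonneg (z - y)]
    exact mul_le_mul_of_nonneg_left this hc2
  have hy2 : y ^ 2 ≤ 1 := by nlinarith
  have d3 : |g y - g 0| ≤ c2 := by
    refine (hq y ⟨hy0, hy1⟩).trans ?_
    nlinarith [mul_le_mul_of_nonneg_left hy2 hc2]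
  have b1 : |omegaFn x * (g x - g y)| ≤ (4 * x) * (c2 * (2 - x - y)) := by
    rw [abs_mul, abs_of_nonneg hωx0]
    exact mul_le_mul hωxu d1 (abs_nonneg _) (by linarith)
  have b2 : |omegaFn z * (g z - g y)| ≤ (4 * (2 - x - y)) * (c2 * x) := by
    rw [abs_mul, abs_of_nonneg hωz0]
    exact mul_le_mul hωzu d2 (abs_nonneg _) (by linarith)
  have b3 : |D * (g y - g 0)| ≤ (8 * (x * (2 - x - y))) * c2 := by
    rw [abs_mul, abs_of_nonneg hD0]
    exact mul_le_mul hD_ub d3 (abs_nonneg _) (by linarith)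
  have hsum : (4*x) * (c2 * (2-x-y)) + (4*(2-x-y)) * (c2 * x) + (8*(x*(2-x-y))) * c2
      = 16 * (c2 * (x * (2 - x - y))) := by ring
  have hM2 : |omegaFn x * (g x - g y) + omegaFn z * (g z - g y) + D * (g y - g 0)|
      ≤ 16 * (c2 * (x * (2 - x - y))) :=
    (abs_add_three _ _ _).trans (by rw [← hsum]; exact add_le_add (add_le_add b1 b2) b3)
  rw [e, habsD]
  refine (abs_add_le _ _).trans ?_
  rw [abs_mul, habsD]
  have hfin : c2 * (x * (2 - x - y)) ≤ c2 * D := mul_le_mul_of_nonneg_left hD_lb hc2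
  nlinarith [abs_nonneg (g 0), mul_nonneg hc2 hD0, hM2, hfin]

end Keys

section Calc
variable {g : ℝ → ℝ}

lemma c2sup_nonneg (g : ℝ → ℝ) : 0 ≤ c2sup g :=
  Real.iSup_nonneg fun _ => abs_nonneg _

lemma second_le_c2sup (hg : ContDiffOn ℝ 2 g (Set.Icc 0 1)) :
    ∀ t ∈ Set.Icc (0:ℝ) 1, |secondDerivOn g t| ≤ c2sup g := by
  intro t ht
  have hUD : UniqueDiffOn ℝ (Set.Icc (0:ℝ) 1) := uniqueDiffOn_Icc zero_lt_one
  have hg1 : ContDiffOn ℝ 1 (derivWithin g (Set.Icc 0 1)) (Set.Icc 0 1) :=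
    hg.derivWithin hUD (by norm_num)
  have hcont2 : ContinuousOn (secondDerivOn g) (Set.Icc (0:ℝ) 1) :=
    (hg1.derivWithin (m := 0) hUD (by norm_num)).continuousOn
  have hbdd : BddAbove (Set.range fun u : Set.Icc (0:ℝ) 1 => |secondDerivOn g u.1|) := by
    have : (Set.range fun u : Set.Icc (0:ℝ) 1 => |secondDerivOn g u.1|)
        = (fun u => |secondDerivOn g u|) '' Set.Icc (0:ℝ) 1 := by
      ext r
      constructor
      · rintro ⟨⟨u, hu⟩, rfl⟩; exact ⟨u, hu, rfl⟩
      · rintro ⟨u, hu, rfl⟩; exact ⟨⟨u, hu⟩, rfl⟩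
    rw [this]
    exact (isCompact_Icc.image_of_continuousOn hcont2.abs).bddAbove
  exact le_ciSup hbdd ⟨t, ht⟩

lemma deriv_bound (hg : ContDiffOn ℝ 2 g (Set.Icc 0 1))
    (hg0 : derivWithin g (Set.Icc 0 1) 0 = 0) :
    ∀ t ∈ Set.Icc (0:ℝ) 1, |derivWithin g (Set.Icc 0 1) t| ≤ c2sup g * t := by
  intro t ht
  have hUD : UniqueDiffOn ℝ (Set.Icc (0:ℝ) 1) := uniqueDiffOn_Icc zero_lt_one
  have hg1 : ContDiffOn ℝ 1 (derivWithin g (Set.Icc 0 1)) (Set.Icc 0 1) :=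
    hg.derivWithin hUD (by norm_num)
  have hgd1 : DifferentiableOn ℝ (derivWithin g (Set.Icc 0 1)) (Set.Icc 0 1) :=
    hg1.differentiableOn one_ne_zero
  have h := Convex.norm_image_sub_le_of_norm_hasDerivWithin_le
    (f := derivWithin g (Set.Icc 0 1)) (f' := secondDerivOn g) (s := Set.Icc (0:ℝ) 1)
    (C := c2sup g) (fun u hu => (hgd1 u hu).hasDerivWithinAt)
    (fun u hu => second_le_c2sup hg u hu) (convex_Icc 0 1)
    ⟨le_refl (0:ℝ), zero_le_one⟩ ht
  rw [hg0, sub_zero, sub_zero] at h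
  simpa [abs_of_nonneg ht.1] using h

lemma lip_bound (hg : ContDiffOn ℝ 2 g (Set.Icc 0 1))
    (hg0 : derivWithin g (Set.Icc 0 1) 0 = 0) :
    ∀ s t, s ∈ Set.Icc (0:ℝ) 1 → t ∈ Set.Icc (0:ℝ) 1 →
      |g s - g t| ≤ c2sup g * (max s t * |s - t|) := by
  intro s t hs ht
  have hgd : DifferentiableOn ℝ g (Set.Icc 0 1) := hg.differentiableOn two_ne_zero
  have hsub : Set.uIcc s t ⊆ Set.Icc (0:ℝ) 1 := by
    rw [← Set.uIcc_of_le (zero_le_one (α := ℝ))]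
    exact Set.uIcc_subset_uIcc (Set.mem_uIcc_of_le hs.1 hs.2) (Set.mem_uIcc_of_le ht.1 ht.2)
  have hb : ∀ u ∈ Set.uIcc s t, ‖derivWithin g (Set.Icc 0 1) u‖ ≤ c2sup g * max s t := by
    intro u hu
    have hu' : u ∈ Set.Icc (0:ℝ) 1 := hsub hu
    have h1 : |derivWithin g (Set.Icc 0 1) u| ≤ c2sup g * u := deriv_bound hg hg0 u hu'
    have h2 : u ≤ max s t := by
      rcases Set.mem_uIcc.1 hu with ⟨_, h⟩ | ⟨_, h⟩
      · exact h.trans (le_max_right s t)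
      · exact h.trans (le_max_left s t)
    exact h1.trans (mul_le_mul_of_nonneg_left h2 (c2sup_nonneg g))
  have h := Convex.norm_image_sub_le_of_norm_hasDerivWithin_le
    (f := g) (f' := derivWithin g (Set.Icc 0 1)) (s := Set.uIcc s t)
    (C := c2sup g * max s t)
    (fun u hu => ((hgd u (hsub hu)).hasDerivWithinAt).mono hsub)
    hb (convex_uIcc s t) Set.left_mem_uIcc Set.right_mem_uIcc
  rw [Real.norm_eq_abs, Real.norm_eq_abs, abs_sub_comm] at h
  calc |g s - g t| ≤ c2sup g * max s t * |t - s| := h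
    _ = c2sup g * (max s t * |s - t|) := by rw [abs_sub_comm]; ring

lemma quad_bound (hg : ContDiffOn ℝ 2 g (Set.Icc 0 1))
    (hg0 : derivWithin g (Set.Icc 0 1) 0 = 0) :
    ∀ t ∈ Set.Icc (0:ℝ) 1, |g t - g 0| ≤ c2sup g * t ^ 2 := by
  intro t ht
  have h := lip_bound hg hg0 t 0 ht ⟨le_refl (0:ℝ), zero_le_one⟩
  rw [max_eq_left ht.1, sub_zero, abs_of_nonneg ht.1] at h
  calc |g t - g 0| ≤ c2sup g * (t * t) := h
    _ = c2sup g * t ^ 2 := by ring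

end Calc

section Master
variable {g : ℝ → ℝ} {c2 : ℝ}

lemma master (hc2 : 0 ≤ c2)
    (hq : ∀ t ∈ Set.Icc (0:ℝ) 1, |g t - g 0| ≤ c2 * t ^ 2)
    (hl : ∀ s t, s ∈ Set.Icc (0:ℝ) 1 → t ∈ Set.Icc (0:ℝ) 1 →
      |g s - g t| ≤ c2 * (max s t * |s - t|))
    {τ₁ τ₂ τ₃ x y : ℝ} (h1 : τ₁ = 1 ∨ τ₁ = -1) (h2 : τ₂ = 1 ∨ τ₂ = -1)
    (h3 : τ₃ = 1 ∨ τ₃ = -1)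
    (hx : x ∈ Set.Icc (0:ℝ) 1) (hy : y ∈ Set.Icc (0:ℝ) 1) :
    |τ₁ * (omegaFn x * g x) + τ₂ * (omegaFn y * g y)
        + τ₃ * (omegaFn (zfun x y) * g (zfun x y))|
      ≤ (|g 0| + 50 * c2)
        * |τ₁ * omegaFn x + τ₂ * omegaFn y + τ₃ * omegaFn (zfun x y)| := by
  have k1 := key1 hc2 hq hx hy
  have k2 := key2 hc2 hq hl hx hy
  have k3 := key3 hc2 hq hl hx hy
  have k4 := key3 hc2 hq hl hy hx
  rw [zfun_comm x y] at k4
  rcases h1 with rfl | rfl <;> rcases h2 with rfl | rfl <;> rcases h3 with rfl | rfl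
  · -- (+,+,+)
    simpa [one_mul] using k1
  · -- (+,+,-)
    rw [show (1:ℝ) * (omegaFn x * g x) + 1 * (omegaFn y * g y)
          + (-1) * (omegaFn (zfun x y) * g (zfun x y))
        = omegaFn x * g x + omegaFn y * g y - omegaFn (zfun x y) * g (zfun x y) from by ring,
      show (1:ℝ) * omegaFn x + 1 * omegaFn y + (-1) * omegaFn (zfun x y)
        = omegaFn x + omegaFn y - omegaFn (zfun x y) from by ring]
    exact k2
  · -- (+,-,+)
    rw [show (1:ℝ) * (omegaFn x * g x) + (-1) * (omegaFn y * g y)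
          + 1 * (omegaFn (zfun x y) * g (zfun x y))
        = omegaFn x * g x - omegaFn y * g y + omegaFn (zfun x y) * g (zfun x y) from by ring,
      show (1:ℝ) * omegaFn x + (-1) * omegaFn y + 1 * omegaFn (zfun x y)
        = omegaFn x - omegaFn y + omegaFn (zfun x y) from by ring]
    exact k3
  · -- (+,-,-) : flip of (-,+,+)
    rw [show (1:ℝ) * (omegaFn x * g x) + (-1) * (omegaFn y * g y)
          + (-1) * (omegaFn (zfun x y) * g (zfun x y))
        = -(omegaFn y * g y - omegaFn x * g x + omegaFn (zfun x y) * g (zfun x y)) from by ring,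
      show (1:ℝ) * omegaFn x + (-1) * omegaFn y + (-1) * omegaFn (zfun x y)
        = -(omegaFn y - omegaFn x + omegaFn (zfun x y)) from by ring, abs_neg, abs_neg]
    exact k4
  · -- (-,+,+)
    rw [show (-1:ℝ) * (omegaFn x * g x) + 1 * (omegaFn y * g y)
          + 1 * (omegaFn (zfun x y) * g (zfun x y))
        = omegaFn y * g y - omegaFn x * g x + omegaFn (zfun x y) * g (zfun x y) from by ring,
      show (-1:ℝ) * omegaFn x + 1 * omegaFn y + 1 * omegaFn (zfun x y)
        = omegaFn y - omegaFn x + omegaFn (zfun x y) from by ring]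
    exact k4
  · -- (-,+,-) : flip of (+,-,+)
    rw [show (-1:ℝ) * (omegaFn x * g x) + 1 * (omegaFn y * g y)
          + (-1) * (omegaFn (zfun x y) * g (zfun x y))
        = -(omegaFn x * g x - omegaFn y * g y + omegaFn (zfun x y) * g (zfun x y)) from by ring,
      show (-1:ℝ) * omegaFn x + 1 * omegaFn y + (-1) * omegaFn (zfun x y)
        = -(omegaFn x - omegaFn y + omegaFn (zfun x y)) from by ring, abs_neg, abs_neg]
    exact k3
  · -- (-,-,+) : flip of (+,+,-)
    rw [show (-1:ℝ) * (omegaFn x * g x) + (-1) * (omegaFn y * g y)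
          + 1 * (omegaFn (zfun x y) * g (zfun x y))
        = -(omegaFn x * g x + omegaFn y * g y - omegaFn (zfun x y) * g (zfun x y)) from by ring,
      show (-1:ℝ) * omegaFn x + (-1) * omegaFn y + 1 * omegaFn (zfun x y)
        = -(omegaFn x + omegaFn y - omegaFn (zfun x y)) from by ring, abs_neg, abs_neg]
    exact k2
  · -- (-,-,-) : flip of (+,+,+)
    rw [show (-1:ℝ) * (omegaFn x * g x) + (-1) * (omegaFn y * g y)
          + (-1) * (omegaFn (zfun x y) * g (zfun x y))
        = -(omegaFn x * g x + omegaFn y * g y + omegaFn (zfun x y) * g (zfun x y)) from by ring,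
      show (-1:ℝ) * omegaFn x + (-1) * omegaFn y + (-1) * omegaFn (zfun x y)
        = -(omegaFn x + omegaFn y + omegaFn (zfun x y)) from by ring, abs_neg, abs_neg]
    exact k1

end Master

/-- Theorem `teor:funzionale`, first part: if `g = ν/ω` extends to a `C²`
function on `[0,1]` with `g'(0) = 0`, then `h₁(ν) ≤ C (c₀ + c₂)` with `C` independent of `ν`. -/
theorem stmt1 :
    ∃ C : ℝ, 0 < C ∧
      ∀ ν g : ℝ → ℝ,
        ContDiffOn ℝ 2 g (Set.Icc 0 1) →
        derivWithin g (Set.Icc 0 1) 0 = 0 →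
        (∀ x ∈ Set.Icc (0 : ℝ) 1, ν x = omegaFn x * g x) →
        h1 ν ≤ ENNReal.ofReal (C * (|g 0| + c2sup g)) := by
  refine ⟨50, by norm_num, ?_⟩
  intro ν g hg hg0 hν
  have hc2 := c2sup_nonneg g
  have hq := quad_bound hg hg0
  have hl := lip_bound hg hg0
  refine sSup_le ?_
  rintro r ⟨τ₁, τ₂, τ₃, x, y, h1, h2, h3, hx, hy, hD, rfl⟩
  have hz := zfun_mem hx hy
  rw [hν x hx, hν y hy, hν _ hz]
  refine ENNReal.ofReal_le_ofReal ?_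
  rw [div_le_iff₀ (abs_pos.mpr hD)]
  have hm := master hc2 hq hl h1 h2 h3 hx hy
  refine hm.trans ?_
  have hDnn : (0:ℝ) ≤ |τ₁ * omegaFn x + τ₂ * omegaFn y + τ₃ * omegaFn (zfun x y)| :=
    abs_nonneg _
  nlinarith [mul_nonneg (abs_nonneg (g 0)) hDnn, mul_nonneg hc2 hDnn]

end
end

section
/- Let ν: [0,1] → ℝ be such that g(x) := ν(x)/ω(x) extends to a C² function on [0,1] with g'(0) ≠ 0. Then h₁(ν) is not bounded, i.e. the supremum defining h₁(ν) equals +∞. -/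
noncomputable section

open Real

open Filter Set Topology in
/-- Theorem `teor:funzionale`, second part: if `g = ν/ω` extends to a `C²`
function on `[0,1]` with `g'(0) ≠ 0`, then `h₁(ν)` is unbounded. -/
theorem stmt2 (ν g : ℝ → ℝ)
    (hg : ContDiffOn ℝ 2 g (Set.Icc 0 1))
    (hg'0 : derivWithin g (Set.Icc 0 1) 0 ≠ 0)
    (hext : ∀ x ∈ Set.Icc (0 : ℝ) 1, ν x = omegaFn x * g x) :
    h1 ν = ⊤ := by
  set d := derivWithin g (Set.Icc 0 1) 0 with hd
  set M : ℝ → ℝ := fun x => g x - Real.cos (π * x / 2) * g (2 * x) with hMdef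
  set u : ℝ → ℝ := fun x => 1 - Real.cos (π * x / 2) with hudef
  set l : Filter ℝ := 𝓝[>] (0:ℝ) with hl
  have hsmall : ∀ᶠ x in l, x ∈ Set.Ioc (0:ℝ) (1/2) :=
    eventually_of_mem (Ioc_mem_nhdsGT (by norm_num)) (fun x hx => hx)
  have hid0 : Tendsto (fun x : ℝ => x) l (𝓝 (0:ℝ)) := by
    rw [hl]; exact tendsto_id.mono_right nhdsWithin_le_nhds
  have hsin_pos : ∀ x ∈ Set.Ioc (0:ℝ) (1/2), 0 < Real.sin (π * x / 2) := by
    intro x hx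
    apply Real.sin_pos_of_pos_of_lt_pi
    · nlinarith [pi_pos, hx.1]
    · nlinarith [pi_pos, hx.2, hx.1]
  have hu_pos : ∀ x ∈ Set.Ioc (0:ℝ) (1/2), 0 < u x := by
    intro x hx
    have hlt : Real.cos (π * x / 2) < Real.cos 0 := by
      apply Real.cos_lt_cos_of_nonneg_of_le_pi le_rfl
      · nlinarith [pi_pos, hx.2]
      · nlinarith [pi_pos, hx.1]
    simp only [hudef]
    simp only [Real.cos_zero] at hlt
    linarith
  have hgd : HasDerivWithinAt g d (Set.Icc 0 1) 0 :=
    ((hg.differentiableOn (by norm_num)) 0 (by norm_num)).hasDerivWithinAt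
  have hslope0 : Tendsto (slope g 0) (𝓝[Set.Icc (0:ℝ) 1 \ {0}] 0) (𝓝 d) :=
    hasDerivWithinAt_iff_tendsto_slope.mp hgd
  have hid : Tendsto (fun x : ℝ => x) l (𝓝[Set.Icc (0:ℝ) 1 \ {0}] 0) := by
    apply tendsto_nhdsWithin_of_tendsto_nhds_of_eventually_within _ hid0
    filter_upwards [hsmall] with x hx
    exact ⟨⟨hx.1.le, by linarith [hx.2]⟩, by simp [ne_of_gt hx.1]⟩
  have h2x : Tendsto (fun x : ℝ => 2 * x) l (𝓝[Set.Icc (0:ℝ) 1 \ {0}] 0) := by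
    apply tendsto_nhdsWithin_of_tendsto_nhds_of_eventually_within
    · have h := hid0.const_mul (2:ℝ)
      simpa using h
    · filter_upwards [hsmall] with x hx
      refine ⟨⟨by linarith [hx.1], by linarith [hx.2]⟩, ?_⟩
      simp only [Set.mem_singleton_iff]
      nlinarith [hx.1]
  have hslope1 : Tendsto (fun x => slope g 0 x) l (𝓝 d) := hslope0.comp hid
  have hslope2 : Tendsto (fun x => slope g 0 (2 * x)) l (𝓝 d) := hslope0.comp h2x
  have hc : Tendsto (fun x : ℝ => Real.cos (π * x / 2)) l (𝓝 1) := by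
    have hcont : Continuous (fun x : ℝ => Real.cos (π * x / 2)) :=
      Real.continuous_cos.comp ((continuous_const.mul continuous_id).div_const 2)
    have h0 := (hcont.tendsto 0).comp hid0
    simpa [Function.comp_def] using h0
  have huslope : Tendsto (fun x => u x / x) l (𝓝 0) := by
    have hder : HasDerivAt (fun x : ℝ => 1 - Real.cos (π * x / 2)) 0 0 := by
      have h1 : HasDerivAt (fun x : ℝ => π * x / 2) (π / 2) 0 := by
        simpa using ((hasDerivAt_id (0:ℝ)).const_mul π).div_const 2
      have h2 := (Real.hasDerivAt_cos (π * 0 / 2)).comp 0 h1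
      have h3 := (hasDerivAt_const (0:ℝ) (1:ℝ)).sub h2
      simpa [Function.comp_def, Pi.sub_def] using h3
    have hsl := hasDerivAt_iff_tendsto_slope.mp hder
    have hidne : Tendsto (fun x : ℝ => x) l (𝓝[≠] (0:ℝ)) := by
      apply tendsto_nhdsWithin_of_tendsto_nhds_of_eventually_within _ hid0
      filter_upwards [hsmall] with x hx
      simp [ne_of_gt hx.1]
    have h4 := hsl.comp hidne
    apply h4.congr'
    filter_upwards [hsmall] with x hx
    simp [slope_def_field, hudef, Function.comp]
  have hg2x : Tendsto (fun x => g (2 * x)) l (𝓝 (g 0)) := by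
    have hcont : ContinuousWithinAt g (Set.Icc 0 1) 0 :=
      (hg.continuousOn) 0 (by norm_num)
    exact hcont.tendsto.comp (h2x.mono_right (nhdsWithin_mono _ diff_subset))
  have hMx : Tendsto (fun x => M x / x) l (𝓝 (-d)) := by
    have key : Tendsto (fun x => slope g 0 x - Real.cos (π * x / 2) * (2 * slope g 0 (2 * x))
        + (u x / x) * g 0) l (𝓝 (d - 1 * (2 * d) + 0 * g 0)) :=
      ((hslope1.sub (hc.mul (hslope2.const_mul 2))).add (huslope.mul tendsto_const_nhds))
    have heq : d - 1 * (2 * d) + 0 * g 0 = -d := by ring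
    rw [heq] at key
    apply key.congr'
    filter_upwards [hsmall] with x hx
    have hx0 : x ≠ 0 := ne_of_gt hx.1
    simp only [slope_def_field, hMdef, hudef]
    field_simp
    ring
  have habs : Tendsto (fun x => |M x / x|) l (𝓝 |d|) := by
    simpa using hMx.abs
  have hxu : Tendsto (fun x => x / u x) l atTop := by
    have h1 : Tendsto (fun x => u x / x) l (𝓝[>] 0) := by
      apply tendsto_nhdsWithin_of_tendsto_nhds_of_eventually_within _ huslope
      filter_upwards [hsmall] with x hx
      exact div_pos (hu_pos x hx) hx.1
    have h2 := h1.inv_tendsto_nhdsGT_zero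
    apply h2.congr
    intro x
    simp [inv_div]
  have hF : Tendsto (fun x => |M x| / u x) l atTop := by
    have hmul := Filter.Tendsto.pos_mul_atTop (abs_pos.mpr hg'0) habs hxu
    apply hmul.congr'
    filter_upwards [hsmall] with x hx
    have hx0 : x ≠ 0 := ne_of_gt hx.1
    have hu0 : u x ≠ 0 := ne_of_gt (hu_pos x hx)
    rw [abs_div, abs_of_pos hx.1]
    field_simp
  unfold h1
  rw [sSup_eq_top]
  intro b hb
  have hev : ∀ᶠ x in l, b.toReal < |M x| / u x := hF.eventually_gt_atTop b.toReal
  obtain ⟨x, hxlt, hx⟩ := (hev.and hsmall).exists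
  have hx0 : 0 < x := hx.1
  have hx12 : x ≤ 1/2 := hx.2
  have hxIcc : x ∈ Set.Icc (0:ℝ) 1 := ⟨hx0.le, by linarith⟩
  have h2xIcc : (2*x) ∈ Set.Icc (0:ℝ) 1 := ⟨by linarith, by linarith⟩
  have hz : zfun x x = 2 * x := by
    simp only [zfun]; rw [if_pos (by linarith)]; ring
  have hsin : 0 < Real.sin (π * x / 2) := hsin_pos x hx
  have hupos : 0 < u x := hu_pos x hx
  have hom2 : omegaFn (2*x) = 4 * Real.sin (π * x / 2) * Real.cos (π * x / 2) := by
    simp only [omegaFn]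
    have h2 : π * (2*x) / 2 = 2 * (π * x / 2) := by ring
    rw [h2, Real.sin_two_mul]; ring
  have hden : 1 * omegaFn x + 1 * omegaFn x + (-1) * omegaFn (zfun x x)
      = 4 * Real.sin (π * x / 2) * u x := by
    rw [hz, hom2]; simp only [omegaFn, hudef]; ring
  have hnum : 1 * ν x + 1 * ν x + (-1) * ν (zfun x x)
      = 4 * Real.sin (π * x / 2) * M x := by
    rw [hz, hext x hxIcc, hext (2*x) h2xIcc, hom2]
    simp only [omegaFn, hMdef]; ring
  have hden_ne : 1 * omegaFn x + 1 * omegaFn x + (-1) * omegaFn (zfun x x) ≠ 0 := by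
    rw [hden]; positivity
  refine ⟨ENNReal.ofReal (|1 * ν x + 1 * ν x + (-1) * ν (zfun x x)| /
      |1 * omegaFn x + 1 * omegaFn x + (-1) * omegaFn (zfun x x)|),
    ⟨1, 1, -1, x, x, Or.inl rfl, Or.inl rfl, Or.inr rfl, hxIcc, hxIcc, hden_ne, rfl⟩, ?_⟩
  have hratio : |1 * ν x + 1 * ν x + (-1) * ν (zfun x x)| /
      |1 * omegaFn x + 1 * omegaFn x + (-1) * omegaFn (zfun x x)| = |M x| / u x := by
    have h4s : 0 < 4 * Real.sin (π * x / 2) := by linarith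
    rw [hnum, hden, abs_mul (4 * Real.sin (π * x / 2)) (M x),
      abs_mul (4 * Real.sin (π * x / 2)) (u x), abs_of_pos h4s, abs_of_pos hupos,
      mul_div_mul_left _ _ (ne_of_gt h4s)]
  rw [hratio]
  exact (ENNReal.lt_ofReal_iff_toReal_lt hb.ne).mpr hxlt

end
end

section
/- Let s ≥ 1 and let τ^{(1)},…,τ^{(S₁)} ∈ {−1,0,1}^{2s} be a 2s-admissible collection, i.e. their supports are pairwise disjoint and their union is {1,…,2s}. Let τ̃ ∈ {−1,0,1}^{2s} have support exactly {1,…,s} (τ̃_i ≠ 0 for i ≤ s and τ̃_i = 0 for i > s). If there exists an index ī such that both P₁τ^{(ī)} ≠ 0 and P₂τ^{(ī)} ≠ 0, where P₁, P₂ are the projections of ℝ^{2s} = ℝ^s ⊕ ℝ^s onto the first and second factor, then τ̃ does not belong to the linear span (over ℝ) of τ^{(1)},…,τ^{(S₁)}. -/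
/-- Lemma `ind.tau`: a vector supported on the first `s` coordinates
does not lie in the span of a `2s`-admissible collection one of whose members mixes the
two blocks. -/
theorem stmt12 (s S₁ : ℕ) (hs : 1 ≤ s)
    (τ : Fin S₁ → (Fin (2 * s) → ℝ))
    (hval : ∀ i j, τ i j = -1 ∨ τ i j = 0 ∨ τ i j = 1)
    (hdisj : ∀ i i', i ≠ i' → ∀ j, τ i j = 0 ∨ τ i' j = 0)
    (hcover : ∀ j, ∃ i, τ i j ≠ 0)
    (τt : Fin (2 * s) → ℝ)
    (hτtval : ∀ j, τt j = -1 ∨ τt j = 0 ∨ τt j = 1)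
    (hτtsupp : ∀ j : Fin (2 * s), τt j ≠ 0 ↔ (j : ℕ) < s)
    (ibar : Fin S₁)
    (hP1 : ∃ j : Fin (2 * s), (j : ℕ) < s ∧ τ ibar j ≠ 0)
    (hP2 : ∃ j : Fin (2 * s), s ≤ (j : ℕ) ∧ τ ibar j ≠ 0) :
    τt ∉ Submodule.span ℝ (Set.range τ) := by
  intro hmem
  rw [Submodule.mem_span_range_iff_exists_fun] at hmem
  obtain ⟨c, hc⟩ := hmem
  obtain ⟨j1, hj1, hτ1⟩ := hP1
  obtain ⟨j2, hj2, hτ2⟩ := hP2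
  have key : ∀ j, τ ibar j ≠ 0 → τt j = c ibar * τ ibar j := by
    intro j hj
    have h := congrFun hc j
    rw [← h, Finset.sum_apply, Finset.sum_eq_single ibar]
    · simp
    · intro i _ hi
      rcases hdisj i ibar hi j with h0 | h0
      · simp [h0]
      · exact absurd h0 hj
    · intro h'; exact absurd (Finset.mem_univ ibar) h'
  have hc1 : c ibar ≠ 0 := by
    have := (hτtsupp j1).mpr hj1
    rw [key j1 hτ1] at this
    exact fun h => this (by simp [h])
  have hc2 : c ibar * τ ibar j2 = 0 := by
    rw [← key j2 hτ2]
    by_contra h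
    exact absurd ((hτtsupp j2).mp h) (by omega)
  rcases mul_eq_zero.mp hc2 with h | h
  · exact hc1 h
  · exact hτ2 h
end

section
/- Let ω(x) = 2 sin(πx/2). For all x, y ∈ [0,1] with y ≤ x and x + y ≥ 1, one has ω(x) + ω(y) − ω(2−x−y) ≥ y/4. -/
noncomputable section

open Real

/-- for `x, y ∈ [0,1]` with `y ≤ x` and `x + y ≥ 1`,
`ω(x) + ω(y) − ω(2−x−y) ≥ y/4`. -/
theorem stmt16 (x y : ℝ) (hx : x ∈ Set.Icc (0 : ℝ) 1) (hy : y ∈ Set.Icc (0 : ℝ) 1)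
    (hyx : y ≤ x) (hxy : 1 ≤ x + y) :
    omegaFn x + omegaFn y - omegaFn (2 - x - y) ≥ y / 4 := by
  obtain ⟨hx0, hx1⟩ := hx
  obtain ⟨hy0, hy1⟩ := hy
  have hπ := Real.pi_pos
  set a := π * x / 2 with ha
  set b := π * y / 2 with hb
  have hkey : π * (2 - x - y) / 2 = π - (a + b) := by rw [ha, hb]; ring
  have hsin : Real.sin (π * (2 - x - y) / 2) = Real.sin (a + b) := by
    rw [hkey, Real.sin_pi_sub]
  have hb0 : 0 ≤ b := by positivity
  have hbpi : b ≤ π / 2 := by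
    rw [hb]; nlinarith
  have ha0 : 0 ≤ a := by positivity
  have hapi : a ≤ π / 2 := by rw [ha]; nlinarith
  -- sin b ≥ y
  have hsinb : y ≤ Real.sin b := by
    have := Real.mul_le_sin hb0 hbpi
    rw [hb] at this ⊢
    calc y = 2 / π * (π * y / 2) := by field_simp
    _ ≤ _ := this
  -- a ≥ π/4, so cos a ≤ √2/2
  have hax : π / 4 ≤ a := by rw [ha]; nlinarith
  have hcosa : Real.cos a ≤ Real.sqrt 2 / 2 := by
    rw [← Real.cos_pi_div_four]
    apply Real.cos_le_cos_of_nonneg_of_le_pi (by positivity) (by linarith) hax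
  have hsqrt2 : Real.sqrt 2 ≤ 3 / 2 := by
    rw [show (3:ℝ)/2 = Real.sqrt ((3/2)^2) by rw [Real.sqrt_sq]; norm_num]
    apply Real.sqrt_le_sqrt; norm_num
  have hsina : 0 ≤ Real.sin a := Real.sin_nonneg_of_nonneg_of_le_pi ha0 (by linarith)
  have hcosb : Real.cos b ≤ 1 := Real.cos_le_one b
  have hE : omegaFn x + omegaFn y - omegaFn (2 - x - y)
      = 2 * (Real.sin a * (1 - Real.cos b) + Real.sin b * (1 - Real.cos a)) := by
    unfold omegaFn
    rw [hsin, Real.sin_add]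
    ring
  rw [hE]
  nlinarith [mul_nonneg hsina (by linarith : (0:ℝ) ≤ 1 - Real.cos b),
    mul_le_mul_of_nonneg_right hsinb (by nlinarith : (0:ℝ) ≤ 1 - Real.cos a),
    mul_le_mul_of_nonneg_left hcosa hy0]

end
end

section
/- Let ω(x) = 2 sin(πx/2), let g ∈ C²([0,1],ℝ) with g'(0) = 0, set c₂ = sup_{x∈[0,1]} |g''(x)|, and define f(x) = ω(x)(g(x) − g(0)). Then there exists an absolute constant C > 0 (independent of g) such that for all x, y ∈ [0,1] with y ≤ x and x + y ≤ 1, one has |f(x) − f(x+y)| ≤ C c₂ x² y and |f(y)| ≤ C c₂ y³. -/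
noncomputable section

open Real

lemma sin_lip (u v : ℝ) : |Real.sin u - Real.sin v| ≤ |u - v| := by
  rw [Real.sin_sub_sin, abs_mul, abs_mul, abs_two]
  have h1 : |Real.sin ((u - v) / 2)| ≤ |(u - v) / 2| := Real.abs_sin_le_abs
  have h2 : |Real.cos ((u + v) / 2)| ≤ 1 := Real.abs_cos_le_one _
  have h3 : (0:ℝ) ≤ |Real.sin ((u - v) / 2)| := abs_nonneg _
  have h4 : |(u - v) / 2| = |u - v| / 2 := by rw [abs_div]; norm_num
  nlinarith [abs_nonneg (u - v)]

lemma omega_lip (a b : ℝ) : |omegaFn a - omegaFn b| ≤ π * |a - b| := by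
  have h := sin_lip (π * a / 2) (π * b / 2)
  have he : π * a / 2 - π * b / 2 = (π / 2) * (a - b) := by ring
  rw [he, abs_mul, abs_of_pos (by positivity : (0:ℝ) < π/2)] at h
  have h2 : omegaFn a - omegaFn b = 2 * (Real.sin (π * a / 2) - Real.sin (π * b / 2)) := by
    unfold omegaFn; ring
  rw [h2, abs_mul, abs_two]
  nlinarith [abs_nonneg (a - b)]

lemma omega_abs_le {x : ℝ} (hx : 0 ≤ x) : |omegaFn x| ≤ π * x := by
  have h := omega_lip x 0
  simpa [omegaFn, abs_of_nonneg hx] using h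

/-- with `f(x) = ω(x)(g(x) − g(0))`, there is an absolute constant `C > 0`
such that `|f(x) − f(x+y)| ≤ C c₂ x² y` and `|f(y)| ≤ C c₂ y³` for `y ≤ x`, `x + y ≤ 1`. -/
theorem stmt18 :
    ∃ C : ℝ, 0 < C ∧
      ∀ g : ℝ → ℝ,
        ContDiffOn ℝ 2 g (Set.Icc 0 1) →
        derivWithin g (Set.Icc 0 1) 0 = 0 →
        ∀ x ∈ Set.Icc (0 : ℝ) 1, ∀ y ∈ Set.Icc (0 : ℝ) 1, y ≤ x → x + y ≤ 1 →
          |(omegaFn x * (g x - g 0)) - (omegaFn (x + y) * (g (x + y) - g 0))| ≤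
              C * c2sup g * x ^ 2 * y ∧
            |omegaFn y * (g y - g 0)| ≤ C * c2sup g * y ^ 3 := by
  refine ⟨20 * π, by positivity, ?_⟩
  intro g hg hg0 x hx y hy hyx hxy
  have hUD : UniqueDiffOn ℝ (Set.Icc (0:ℝ) 1) := uniqueDiffOn_Icc one_pos
  set s : Set ℝ := Set.Icc (0:ℝ) 1 with hs
  set g' := derivWithin g s with hg'def
  -- continuity of second derivative
  have hcd1 : ContDiffOn ℝ 1 g' s := hg.derivWithin hUD (by norm_num)
  have hcd0 : ContinuousOn (secondDerivOn g) s :=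
    (hcd1.derivWithin (m := 0) hUD (by norm_num)).continuousOn
  -- boundedness and sup bound
  have hbdd : BddAbove (Set.range fun t : s => |secondDerivOn g t.1|) := by
    have : (Set.range fun t : s => |secondDerivOn g t.1|)
        = (fun u => |secondDerivOn g u|) '' s := (Set.image_eq_range (fun u => |secondDerivOn g u|) s).symm
    rw [this]
    exact (isCompact_Icc.image_of_continuousOn hcd0.abs).bddAbove
  have hle : ∀ t ∈ s, |secondDerivOn g t| ≤ c2sup g := by
    intro t ht
    exact le_ciSup hbdd ⟨t, ht⟩
  have hc0 : 0 ≤ c2sup g :=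
    le_trans (abs_nonneg _) (hle 0 (by constructor <;> norm_num))
  -- derivative facts
  have hd1 : ∀ t ∈ s, HasDerivWithinAt g (g' t) s t := by
    intro t ht
    exact (hg.differentiableOn (by norm_num) t ht).hasDerivWithinAt
  have hd2 : ∀ t ∈ s, HasDerivWithinAt g' (secondDerivOn g t) s t := by
    intro t ht
    exact (hcd1.differentiableOn (by norm_num) t ht).hasDerivWithinAt
  -- |g' t| ≤ c₂ t
  have hgp : ∀ t ∈ s, |g' t| ≤ c2sup g * t := by
    intro t ht
    have := (convex_Icc (0:ℝ) 1).norm_image_sub_le_of_norm_hasDerivWithin_le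
      hd2 (fun z hz => hle z hz) (by constructor <;> norm_num : (0:ℝ) ∈ s) ht
    simpa [hg0, Real.norm_eq_abs, abs_of_nonneg ht.1] using this
  -- g increments: on subinterval [a,b] ⊆ s, with |g'| ≤ M there
  have hinc : ∀ a b M : ℝ, a ≤ b → Set.Icc a b ⊆ s →
      (∀ t ∈ Set.Icc a b, c2sup g * t ≤ M) → |g b - g a| ≤ M * (b - a) := by
    intro a b M hab hsub hM
    have := (convex_Icc a b).norm_image_sub_le_of_norm_hasDerivWithin_le
      (f' := g') (fun z hz => (hd1 z (hsub hz)).mono hsub)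
      (fun z hz => le_trans (hgp z (hsub hz)) (hM z hz))
      (Set.left_mem_Icc.2 hab) (Set.right_mem_Icc.2 hab)
    simpa [Real.norm_eq_abs, abs_of_nonneg (sub_nonneg.2 hab)] using this
  obtain ⟨hx0, hx1⟩ := hx
  obtain ⟨hy0, hy1⟩ := hy
  have hxy0 : (0:ℝ) ≤ x + y := by linarith
  -- |g x - g 0| ≤ c x²
  have hgx : |g x - g 0| ≤ c2sup g * x * x := by
    have := hinc 0 x (c2sup g * x) hx0
      (fun z hz => ⟨hz.1, le_trans hz.2 hx1⟩)
      (fun t ht => by nlinarith [ht.2, hc0])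
    simpa using this
  have hgy : |g y - g 0| ≤ c2sup g * y * y := by
    have := hinc 0 y (c2sup g * y) hy0
      (fun z hz => ⟨hz.1, le_trans hz.2 hy1⟩)
      (fun t ht => by nlinarith [ht.2, hc0])
    simpa using this
  -- |g(x+y) - g x| ≤ 2 c x y
  have hgxy : |g (x + y) - g x| ≤ (c2sup g * (x + y)) * y := by
    have := hinc x (x + y) (c2sup g * (x + y)) (by linarith)
      (fun z hz => ⟨le_trans hx0 hz.1, le_trans hz.2 hxy⟩)
      (fun t ht => by nlinarith [ht.2, hc0])
    simpa using this
  have hpi : (0:ℝ) < π := Real.pi_pos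
  constructor
  · have key : omegaFn x * (g x - g 0) - omegaFn (x + y) * (g (x + y) - g 0)
        = (omegaFn x - omegaFn (x + y)) * (g x - g 0)
          + omegaFn (x + y) * (g x - g (x + y)) := by ring
    rw [key]
    have h1 : |omegaFn x - omegaFn (x + y)| ≤ π * y := by
      have := omega_lip x (x + y)
      simp only [show x - (x + y) = -y by ring, abs_neg, abs_of_nonneg hy0] at this
      exact this
    have h2 : |omegaFn (x + y)| ≤ π * (x + y) := omega_abs_le hxy0
    have h3 : |g x - g (x + y)| ≤ (c2sup g * (x + y)) * y := by
      rw [abs_sub_comm]; exact hgxy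
    calc |(omegaFn x - omegaFn (x + y)) * (g x - g 0)
          + omegaFn (x + y) * (g x - g (x + y))|
        ≤ |(omegaFn x - omegaFn (x + y)) * (g x - g 0)|
          + |omegaFn (x + y) * (g x - g (x + y))| := abs_add_le _ _
      _ = |omegaFn x - omegaFn (x + y)| * |g x - g 0|
          + |omegaFn (x + y)| * |g x - g (x + y)| := by rw [abs_mul, abs_mul]
      _ ≤ (π * y) * (c2sup g * x * x) + (π * (x + y)) * ((c2sup g * (x + y)) * y) := by
          apply add_le_add
          · exact mul_le_mul h1 hgx (abs_nonneg _) (by positivity)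
          · exact mul_le_mul h2 h3 (abs_nonneg _) (by positivity)
      _ ≤ 20 * π * c2sup g * x ^ 2 * y := by
          nlinarith [mul_nonneg (mul_nonneg hpi.le hc0) hy0,
            mul_nonneg (sub_nonneg.2 hyx) (by linarith : (0:ℝ) ≤ 3*x+y),
            mul_nonneg (mul_nonneg (mul_nonneg hpi.le hc0) hy0) (sq_nonneg x)]
  · have h1 : |omegaFn y| ≤ π * y := omega_abs_le hy0
    calc |omegaFn y * (g y - g 0)| = |omegaFn y| * |g y - g 0| := abs_mul _ _
      _ ≤ (π * y) * (c2sup g * y * y) :=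
          mul_le_mul h1 hgy (abs_nonneg _) (by positivity)
      _ ≤ 20 * π * c2sup g * y ^ 3 := by nlinarith [mul_nonneg (mul_nonneg hpi.le hc0) (pow_nonneg hy0 3)]


end
end
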